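/- Every Bell class state ρ on ℂ^d⊗ℂ^d satisfies the perfect correlation form of the original Bell inequality: for all Hermitian matrices W₁, W̃₁, W₂, W̃₂ on ℂ^d with operator norms at most 1, |tr[ρ(W₁⊗W₂)] − tr[ρ(W₁⊗W̃₂)]| ≤ 1 − tr[ρ(W₂⊗W̃₂)] and |tr[ρ(W₁⊗W₂)] − tr[ρ(W̃₁⊗W₂)]| ≤ 1 − tr[ρ(W₁⊗W̃₁)]. -/

import Mathlib

open Matrix
open scoped Kronecker ComplexOrder

namespace BellPaper

variable {α β γ : Type*} [Fintype α] [Fintype β] [Fintype γ]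

/-- Partial trace over the first factor of a threefold tensor product. -/
noncomputable def ptr1 (T : Matrix ((α × β) × γ) ((α × β) × γ) ℂ) :
    Matrix (β × γ) (β × γ) ℂ :=
  fun p q => ∑ i : α, T ((i, p.1), p.2) ((i, q.1), q.2)

/-- Partial trace over the second factor of a threefold tensor product. -/
noncomputable def ptr2 (T : Matrix ((α × β) × γ) ((α × β) × γ) ℂ) :
    Matrix (α × γ) (α × γ) ℂ :=
  fun p q => ∑ j : β, T ((p.1, j), p.2) ((q.1, j), q.2)

/-- Partial trace over the third factor of a threefold tensor product. -/
noncomputable def ptr3 (T : Matrix ((α × β) × γ) ((α × β) × γ) ℂ) :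
    Matrix (α × β) (α × β) ℂ :=
  fun p q => ∑ k : γ, T (p, k) (q, k)

/-- Partial trace over the second factor of a twofold tensor product. -/
noncomputable def ptrB (M : Matrix (α × β) (α × β) ℂ) : Matrix α α ℂ :=
  fun i i' => ∑ j : β, M (i, j) (i', j)

/-- A density matrix: positive semidefinite with unit trace. -/
def IsDensityMatrix {n : Type*} [Fintype n] (ρ : Matrix n n ℂ) : Prop :=
  ρ.PosSemidef ∧ ρ.trace = 1

/-- Source-operator of type `T₁₂₂` for a state on ℂ^{d₁}⊗ℂ^{d₂}. -/
def IsSource122 {d₁ d₂ : ℕ} (ρ : Matrix (Fin d₁ × Fin d₂) (Fin d₁ × Fin d₂) ℂ)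
    (T : Matrix ((Fin d₁ × Fin d₂) × Fin d₂) ((Fin d₁ × Fin d₂) × Fin d₂) ℂ) : Prop :=
  T.IsHermitian ∧ ptr2 T = ρ ∧ ptr3 T = ρ

/-- Source-operator of type `T₁₁₂` for a state on ℂ^{d₁}⊗ℂ^{d₂}. -/
def IsSource112 {d₁ d₂ : ℕ} (ρ : Matrix (Fin d₁ × Fin d₂) (Fin d₁ × Fin d₂) ℂ)
    (S : Matrix ((Fin d₁ × Fin d₁) × Fin d₂) ((Fin d₁ × Fin d₁) × Fin d₂) ℂ) : Prop :=
  S.IsHermitian ∧ ptr1 S = ρ ∧ ptr2 S = ρ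

/-- A DSO state: a density matrix admitting a positive semidefinite source-operator. -/
def IsDSO {d₁ d₂ : ℕ} (ρ : Matrix (Fin d₁ × Fin d₂) (Fin d₁ × Fin d₂) ℂ) : Prop :=
  IsDensityMatrix ρ ∧
    ((∃ T, T.PosSemidef ∧ IsSource122 ρ T) ∨ (∃ S, S.PosSemidef ∧ IsSource112 ρ S))

/-- A Bell class state: a density matrix admitting a density source-operator with the
special dilation property (all three partial traces equal the state). -/
def IsBellClass {d : ℕ} (ρ : Matrix (Fin d × Fin d) (Fin d × Fin d) ℂ) : Prop :=
  IsDensityMatrix ρ ∧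
    ∃ T : Matrix ((Fin d × Fin d) × Fin d) ((Fin d × Fin d) × Fin d) ℂ,
      T.PosSemidef ∧ ptr1 T = ρ ∧ ptr2 T = ρ ∧ ptr3 T = ρ

/-- The operator (spectral) norm of a matrix acting on a Euclidean space. -/
noncomputable def opNorm {n : Type*} [Fintype n] [DecidableEq n] (W : Matrix n n ℂ) : ℝ :=
  ‖Matrix.toEuclideanCLM (𝕜 := ℂ) W‖

/-- The swap (permutation) operator `V_d` on ℂ^d ⊗ ℂ^d. -/
noncomputable def swapMat (d : ℕ) : Matrix (Fin d × Fin d) (Fin d × Fin d) ℂ :=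
  fun p q => if p.1 = q.2 ∧ p.2 = q.1 then 1 else 0

/-- The Werner state on ℂ^d ⊗ ℂ^d. -/
noncomputable def werner (d : ℕ) : Matrix (Fin d × Fin d) (Fin d × Fin d) ℂ :=
  (((d : ℂ) + 1) / (d : ℂ) ^ 3) • (1 : Matrix (Fin d × Fin d) (Fin d × Fin d) ℂ)
    - ((d : ℂ) ^ 2)⁻¹ • swapMat d

/-- The triple of indices of a point of the threefold product. -/
def triple {d : ℕ} (p : (Fin d × Fin d) × Fin d) : Fin 3 → Fin d := ![p.1.1, p.1.2, p.2]

/-- The unitary permuting the three tensor factors of ℂ^d ⊗ ℂ^d ⊗ ℂ^d according to π. -/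
noncomputable def permMat (d : ℕ) (π : Equiv.Perm (Fin 3)) :
    Matrix ((Fin d × Fin d) × Fin d) ((Fin d × Fin d) × Fin d) ℂ :=
  fun p q => if ∀ i, triple p (π i) = triple q i then 1 else 0

/-- The antisymmetrization projection `Q_d^{(-)}` on ℂ^d ⊗ ℂ^d ⊗ ℂ^d. -/
noncomputable def antisym (d : ℕ) :
    Matrix ((Fin d × Fin d) × Fin d) ((Fin d × Fin d) × Fin d) ℂ :=
  (6 : ℂ)⁻¹ • ∑ π : Equiv.Perm (Fin 3), (((Equiv.Perm.sign π : ℤ) : ℂ)) • permMat d π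

/-- Tensor product of two vectors. -/
def tens {m n : Type*} (u : m → ℂ) (v : n → ℂ) : m × n → ℂ := fun p => u p.1 * v p.2

/-- The rank-one operator |v⟩⟨v|. -/
noncomputable def outer {n : Type*} (v : n → ℂ) : Matrix n n ℂ :=
  Matrix.vecMulVec v (star v)



section Aux

set_option linter.unusedSectionVars false

variable {m n : Type*} [Fintype m] [Fintype n]

private lemma kron_conjT (A : Matrix m m ℂ) (B : Matrix n n ℂ) :
    (A ⊗ₖ B)ᴴ = Aᴴ ⊗ₖ Bᴴ := by
  ext ⟨i,j⟩ ⟨k,l⟩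
  simp [conjTranspose_apply, kroneckerMap_apply, mul_comm]

private lemma psd_kron [DecidableEq m] [DecidableEq n]
    {A : Matrix m m ℂ} {B : Matrix n n ℂ} (hA : A.PosSemidef) (hB : B.PosSemidef) :
    (A ⊗ₖ B).PosSemidef := by
  exact hA.kronecker hB

private lemma trace_nonneg' [DecidableEq n] {M : Matrix n n ℂ} (hM : M.PosSemidef) :
    0 ≤ M.trace := by
  exact hM.trace_nonneg

private lemma trace_mul_psd_nonneg [DecidableEq n]
    {T M : Matrix n n ℂ} (hT : T.PosSemidef) (hM : M.PosSemidef) :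
    0 ≤ (T * M).trace := by
  open scoped MatrixOrder in
  obtain ⟨a, rfl⟩ := CStarAlgebra.nonneg_iff_eq_star_mul_self.mp hM.nonneg
  rw [star_eq_conjTranspose, ← Matrix.mul_assoc, Matrix.trace_mul_cycle]
  exact trace_nonneg' (hT.mul_mul_conjTranspose_same a)

private lemma contraction_psd [DecidableEq n] {W : Matrix n n ℂ}
    (hW : W.IsHermitian) (hn : opNorm W ≤ 1) (s : ℝ) (hs : |s| ≤ 1) :
    (1 + (s:ℂ) • W).PosSemidef := by
  refine posSemidef_iff_dotProduct_mulVec.mpr ⟨?_, ?_⟩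
  · have : ((s:ℂ) • W).IsHermitian := by
      unfold Matrix.IsHermitian
      rw [conjTranspose_smul, hW.eq]
      simp [Complex.star_def]
    exact Matrix.isHermitian_one.add this
  · intro x
    have hadd : dotProduct (star x) ((1 + (s:ℂ) • W) *ᵥ x)
        = dotProduct (star x) x + (s:ℂ) * dotProduct (star x) (W *ᵥ x) := by
      rw [Matrix.add_mulVec, dotProduct_add, Matrix.one_mulVec,
        Matrix.smul_mulVec, dotProduct_smul, smul_eq_mul]
    have h1 : dotProduct (star x) x = ((‖(WithLp.equiv 2 (n → ℂ)).symm x‖ : ℝ) : ℂ)^2 := by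
      rw [WithLp.equiv_symm_apply, dotProduct_comm, ← EuclideanSpace.inner_toLp_toLp,
        inner_self_eq_norm_sq_to_K]
      norm_cast
    have h2 : dotProduct (star x) (W *ᵥ x)
        = inner (𝕜 := ℂ) ((WithLp.equiv 2 (n → ℂ)).symm x)
          (Matrix.toEuclideanCLM (𝕜 := ℂ) W ((WithLp.equiv 2 (n → ℂ)).symm x)) := by
      rw [WithLp.equiv_symm_apply, Matrix.toEuclideanCLM_toLp, EuclideanSpace.inner_toLp_toLp,
        dotProduct_comm]
    have hclm : (Matrix.toEuclideanCLM (𝕜 := ℂ) W) ((WithLp.equiv 2 (n → ℂ)).symm x)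
        = Matrix.toEuclideanLin W ((WithLp.equiv 2 (n → ℂ)).symm x) := by
      rw [← Matrix.coe_toEuclideanCLM_eq_toEuclideanLin]; rfl
    have hsymm := Matrix.isHermitian_iff_isSymmetric.mp hW
    have hreal : (starRingEnd ℂ) (dotProduct (star x) (W *ᵥ x))
        = dotProduct (star x) (W *ᵥ x) := by
      rw [h2, hclm, inner_conj_symm, hsymm _ _]
    obtain ⟨r, hr⟩ : ∃ r : ℝ, dotProduct (star x) (W *ᵥ x) = (r : ℂ) :=
      ⟨_, (Complex.conj_eq_iff_re.mp hreal).symm⟩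
    have hbound : |r| ≤ ‖(WithLp.equiv 2 (n → ℂ)).symm x‖^2 := by
      have h3 : ‖(dotProduct (star x) (W *ᵥ x))‖
          ≤ ‖(WithLp.equiv 2 (n → ℂ)).symm x‖^2 := by
        rw [h2]
        calc ‖(inner (𝕜 := ℂ) ((WithLp.equiv 2 (n → ℂ)).symm x) (Matrix.toEuclideanCLM (𝕜 := ℂ) W ((WithLp.equiv 2 (n → ℂ)).symm x)) : ℂ)‖
            ≤ ‖(WithLp.equiv 2 (n → ℂ)).symm x‖
              * ‖Matrix.toEuclideanCLM (𝕜 := ℂ) W ((WithLp.equiv 2 (n → ℂ)).symm x)‖ :=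
              norm_inner_le_norm _ _
          _ ≤ ‖(WithLp.equiv 2 (n → ℂ)).symm x‖
              * (opNorm W * ‖(WithLp.equiv 2 (n → ℂ)).symm x‖) := by
              gcongr
              exact (Matrix.toEuclideanCLM (𝕜 := ℂ) W).le_opNorm _
          _ ≤ ‖(WithLp.equiv 2 (n → ℂ)).symm x‖^2 := by
              nlinarith [norm_nonneg ((WithLp.equiv 2 (n → ℂ)).symm x)]
      rw [hr] at h3
      simpa using h3
    rw [hadd, h1, hr]
    have hnn : (0:ℝ) ≤ ‖(WithLp.equiv 2 (n → ℂ)).symm x‖^2 + s * r := by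
      rcases abs_le.mp hs with ⟨hs1, hs2⟩
      rcases abs_le.mp hbound with ⟨hb1, hb2⟩
      nlinarith [sq_nonneg (‖(WithLp.equiv 2 (n → ℂ)).symm x‖)]
    have hc : (((‖(WithLp.equiv 2 (n → ℂ)).symm x‖:ℝ)^2 + s * r : ℝ) : ℂ)
        = ((‖(WithLp.equiv 2 (n → ℂ)).symm x‖ : ℝ) : ℂ)^2 + (s:ℂ) * (r:ℂ) := by push_cast; ring
    rw [← hc]
    exact_mod_cast Complex.zero_le_real.mpr hnn

end Aux

section TraceRed

set_option linter.unusedSectionVars false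

variable [DecidableEq α] [DecidableEq β] [DecidableEq γ]

private lemma tr_ptr3 (T : Matrix ((α × β) × γ) ((α × β) × γ) ℂ) (X : Matrix (α × β) (α × β) ℂ) :
    (T * (X ⊗ₖ (1 : Matrix γ γ ℂ))).trace = (ptr3 T * X).trace := by
  simp only [Matrix.trace, Matrix.diag, Matrix.mul_apply, ptr3, kroneckerMap_apply,
    Matrix.one_apply, mul_ite, mul_one, mul_zero, Fintype.sum_prod_type,
    Finset.sum_ite_eq', Finset.mem_univ, if_true, Finset.sum_mul]
  refine Finset.sum_congr rfl fun a _ => Finset.sum_congr rfl fun b _ => ?_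
  rw [Finset.sum_comm]
  refine Finset.sum_congr rfl fun c _ => ?_
  rw [Finset.sum_comm]

private lemma tr_ptr1 (T : Matrix ((α × β) × γ) ((α × β) × γ) ℂ) (Y : Matrix β β ℂ)
    (Z : Matrix γ γ ℂ) :
    (T * (((1 : Matrix α α ℂ) ⊗ₖ Y) ⊗ₖ Z)).trace = (ptr1 T * (Y ⊗ₖ Z)).trace := by
  have hR : (ptr1 T * (Y ⊗ₖ Z)).trace
      = ∑ b : β, ∑ c : γ, ∑ b' : β, ∑ c' : γ, ∑ a : α,
          T ((a,b),c) ((a,b'),c') * (Y b' b * Z c' c) := by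
    simp only [Matrix.trace, Matrix.diag, Matrix.mul_apply, ptr1, kroneckerMap_apply,
      Fintype.sum_prod_type, Finset.sum_mul]
  rw [hR]
  simp only [Matrix.trace, Matrix.diag, Matrix.mul_apply, kroneckerMap_apply,
    Matrix.one_apply, ite_mul, zero_mul, one_mul, mul_ite, mul_zero,
    Fintype.sum_prod_type]
  conv_lhs => rw [Finset.sum_comm]
  refine Finset.sum_congr rfl fun b _ => ?_
  conv_lhs => rw [Finset.sum_comm]
  refine Finset.sum_congr rfl fun c _ => ?_
  have hcol : ∀ a : α, (∑ a' : α, ∑ b' : β, ∑ c' : γ,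
      if a' = a then T ((a,b),c) ((a',b'),c') * (Y b' b * Z c' c) else 0)
      = ∑ b' : β, ∑ c' : γ, T ((a,b),c) ((a,b'),c') * (Y b' b * Z c' c) := by
    intro a
    rw [Finset.sum_comm]
    refine Finset.sum_congr rfl fun b' _ => ?_
    rw [Finset.sum_comm]
    refine Finset.sum_congr rfl fun c' _ => ?_
    simp
  rw [Finset.sum_congr rfl fun a _ => hcol a]
  conv_lhs => rw [Finset.sum_comm]
  refine Finset.sum_congr rfl fun b' _ => ?_
  conv_lhs => rw [Finset.sum_comm]

private lemma tr_ptr2 (T : Matrix ((α × β) × γ) ((α × β) × γ) ℂ) (Y : Matrix α α ℂ)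
    (Z : Matrix γ γ ℂ) :
    (T * ((Y ⊗ₖ (1 : Matrix β β ℂ)) ⊗ₖ Z)).trace = (ptr2 T * (Y ⊗ₖ Z)).trace := by
  have hR : (ptr2 T * (Y ⊗ₖ Z)).trace
      = ∑ a : α, ∑ c : γ, ∑ a' : α, ∑ c' : γ, ∑ b : β,
          T ((a,b),c) ((a',b),c') * (Y a' a * Z c' c) := by
    simp only [Matrix.trace, Matrix.diag, Matrix.mul_apply, ptr2, kroneckerMap_apply,
      Fintype.sum_prod_type, Finset.sum_mul]
  rw [hR]
  simp only [Matrix.trace, Matrix.diag, Matrix.mul_apply, kroneckerMap_apply,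
    Matrix.one_apply, ite_mul, zero_mul, one_mul, mul_ite, mul_zero, mul_one,
    Fintype.sum_prod_type]
  refine Finset.sum_congr rfl fun a _ => ?_
  have hcol : ∀ b c a', (∑ b' : β, ∑ c' : γ,
      if b' = b then T ((a,b),c) ((a',b'),c') * (Y a' a * Z c' c) else 0)
      = ∑ c' : γ, T ((a,b),c) ((a',b),c') * (Y a' a * Z c' c) := by
    intro b c a'
    rw [Finset.sum_comm]
    refine Finset.sum_congr rfl fun c' _ => ?_
    simp
  rw [Finset.sum_congr rfl fun b (_ : b ∈ Finset.univ) => Finset.sum_congr rfl fun c _ =>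
    Finset.sum_congr rfl fun a' _ => hcol b c a']
  conv_lhs => rw [Finset.sum_comm]
  refine Finset.sum_congr rfl fun c _ => ?_
  conv_lhs => rw [Finset.sum_comm]
  refine Finset.sum_congr rfl fun a' _ => ?_
  conv_lhs => rw [Finset.sum_comm]

end TraceRed

section Master

/-- the master Bell-type positivity: for a PSD `T` of unit trace and Hermitian
contractions `X Y Z`, and signs `s₁ s₂ s₃`, the corresponding correlation combination
is nonnegative. -/
private lemma master {d : ℕ} {T : Matrix ((Fin d × Fin d) × Fin d) ((Fin d × Fin d) × Fin d) ℂ}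
    (hT : T.PosSemidef) (htr : T.trace = 1)
    {X Y Z : Matrix (Fin d) (Fin d) ℂ}
    (hX : X.IsHermitian) (hY : Y.IsHermitian) (hZ : Z.IsHermitian)
    (hnX : opNorm X ≤ 1) (hnY : opNorm Y ≤ 1) (hnZ : opNorm Z ≤ 1)
    (s₁ s₂ s₃ : ℝ) (h₁ : |s₁| ≤ 1) (h₂ : |s₂| ≤ 1) (h₃ : |s₃| ≤ 1) :
    0 ≤ 1 + ((s₁*s₂ : ℝ):ℂ) * (T * ((X ⊗ₖ Y) ⊗ₖ (1 : Matrix (Fin d) (Fin d) ℂ))).trace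
        + ((s₁*s₃ : ℝ):ℂ) * (T * ((X ⊗ₖ (1 : Matrix (Fin d) (Fin d) ℂ)) ⊗ₖ Z)).trace
        + ((s₂*s₃ : ℝ):ℂ) * (T * (((1 : Matrix (Fin d) (Fin d) ℂ) ⊗ₖ Y) ⊗ₖ Z)).trace := by
  set P : Matrix ((Fin d × Fin d) × Fin d) ((Fin d × Fin d) × Fin d) ℂ :=
    ((1 + (s₁:ℂ) • X) ⊗ₖ (1 + (s₂:ℂ) • Y)) ⊗ₖ (1 + (s₃:ℂ) • Z) with hP
  set Q : Matrix ((Fin d × Fin d) × Fin d) ((Fin d × Fin d) × Fin d) ℂ :=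
    ((1 + ((-s₁ : ℝ):ℂ) • X) ⊗ₖ (1 + ((-s₂ : ℝ):ℂ) • Y)) ⊗ₖ (1 + ((-s₃ : ℝ):ℂ) • Z) with hQ
  have hPpsd : P.PosSemidef :=
    psd_kron (psd_kron (contraction_psd hX hnX s₁ h₁) (contraction_psd hY hnY s₂ h₂))
      (contraction_psd hZ hnZ s₃ h₃)
  have hQpsd : Q.PosSemidef :=
    psd_kron (psd_kron (contraction_psd hX hnX (-s₁) (by simpa using h₁))
      (contraction_psd hY hnY (-s₂) (by simpa using h₂)))
      (contraction_psd hZ hnZ (-s₃) (by simpa using h₃))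
  have hiden : P + Q
      = (2:ℂ) • (((1 : Matrix (Fin d) (Fin d) ℂ) ⊗ₖ (1 : Matrix (Fin d) (Fin d) ℂ))
            ⊗ₖ (1 : Matrix (Fin d) (Fin d) ℂ))
        + ((2*(s₁*s₂) : ℝ):ℂ) • ((X ⊗ₖ Y) ⊗ₖ (1 : Matrix (Fin d) (Fin d) ℂ))
        + ((2*(s₁*s₃) : ℝ):ℂ) • ((X ⊗ₖ (1 : Matrix (Fin d) (Fin d) ℂ)) ⊗ₖ Z)
        + ((2*(s₂*s₃) : ℝ):ℂ) • (((1 : Matrix (Fin d) (Fin d) ℂ) ⊗ₖ Y) ⊗ₖ Z) := by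
    ext ⟨⟨i,j⟩,k⟩ ⟨⟨i',j'⟩,k'⟩
    simp only [hP, hQ, Matrix.add_apply, Matrix.smul_apply, kroneckerMap_apply,
      smul_eq_mul, Complex.ofReal_neg, Complex.ofReal_mul]
    push_cast
    ring
  have hsum : 0 ≤ (T * (P + Q)).trace :=
    trace_mul_psd_nonneg hT (hPpsd.add hQpsd)
  rw [hiden] at hsum
  rw [Matrix.one_kronecker_one, Matrix.one_kronecker_one] at hsum
  simp only [Matrix.mul_add, Matrix.mul_smul, Matrix.trace_add, Matrix.trace_smul,
    Matrix.mul_one, htr, smul_eq_mul, mul_one] at hsum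
  have h2 : (0:ℂ) ≤ (2:ℂ) * (1 + ((s₁*s₂ : ℝ):ℂ)
        * (T * ((X ⊗ₖ Y) ⊗ₖ (1 : Matrix (Fin d) (Fin d) ℂ))).trace
      + ((s₁*s₃ : ℝ):ℂ) * (T * ((X ⊗ₖ (1 : Matrix (Fin d) (Fin d) ℂ)) ⊗ₖ Z)).trace
      + ((s₂*s₃ : ℝ):ℂ) * (T * (((1 : Matrix (Fin d) (Fin d) ℂ) ⊗ₖ Y) ⊗ₖ Z)).trace) := by
    convert hsum using 1
    push_cast
    ring
  have hhalf : (0:ℂ) ≤ (2:ℂ)⁻¹ := by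
    rw [Complex.le_def]
    norm_num
  have h3 := mul_nonneg hhalf h2
  rw [← mul_assoc] at h3
  norm_num at h3
  convert h3 using 3 <;> push_cast <;> ring

end Master

/-- every Bell class state satisfies the perfect correlation form (41) of
the original Bell inequality. -/
theorem bell_class_bell_inequality {d : ℕ}
    (ρ : Matrix (Fin d × Fin d) (Fin d × Fin d) ℂ) (hρ : IsBellClass ρ)
    (W₁ W₁' W₂ W₂' : Matrix (Fin d) (Fin d) ℂ)
    (hW₁ : W₁.IsHermitian) (hW₁' : W₁'.IsHermitian)
    (hW₂ : W₂.IsHermitian) (hW₂' : W₂'.IsHermitian)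
    (hn₁ : opNorm W₁ ≤ 1) (hn₁' : opNorm W₁' ≤ 1)
    (hn₂ : opNorm W₂ ≤ 1) (hn₂' : opNorm W₂' ≤ 1) :
    ‖(ρ * (W₁ ⊗ₖ W₂)).trace - (ρ * (W₁ ⊗ₖ W₂')).trace‖
      ≤ 1 - ((ρ * (W₂ ⊗ₖ W₂')).trace).re
    ∧ ‖(ρ * (W₁ ⊗ₖ W₂)).trace - (ρ * (W₁' ⊗ₖ W₂)).trace‖
      ≤ 1 - ((ρ * (W₁ ⊗ₖ W₁')).trace).re := by
  obtain ⟨⟨hpsd, htrρ⟩, T, hTpsd, hptr1, hptr2, hptr3⟩ := hρ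
  -- trace of T is 1
  have htrT : T.trace = 1 := by
    have := tr_ptr3 T (1 : Matrix (Fin d × Fin d) (Fin d × Fin d) ℂ)
    rw [Matrix.one_kronecker_one, Matrix.mul_one, Matrix.mul_one, hptr3, htrρ] at this
    exact this
  -- the master inequality specialized, with trace reduction
  have key : ∀ (X Y Z : Matrix (Fin d) (Fin d) ℂ), X.IsHermitian → Y.IsHermitian →
      Z.IsHermitian → opNorm X ≤ 1 → opNorm Y ≤ 1 → opNorm Z ≤ 1 →
      ∀ s₁ s₂ s₃ : ℝ, |s₁| ≤ 1 → |s₂| ≤ 1 → |s₃| ≤ 1 →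
      0 ≤ 1 + ((s₁*s₂ : ℝ):ℂ) * (ρ * (X ⊗ₖ Y)).trace
          + ((s₁*s₃ : ℝ):ℂ) * (ρ * (X ⊗ₖ Z)).trace
          + ((s₂*s₃ : ℝ):ℂ) * (ρ * (Y ⊗ₖ Z)).trace := by
    intro X Y Z hX hY hZ hnX hnY hnZ s₁ s₂ s₃ h₁ h₂ h₃
    have := master hTpsd htrT hX hY hZ hnX hnY hnZ s₁ s₂ s₃ h₁ h₂ h₃
    rwa [tr_ptr3, tr_ptr2, tr_ptr1, hptr3, hptr2, hptr1] at this
  have habs : ∀ u v w : ℂ,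
      (0 ≤ 1 + (((-1)*1 : ℝ):ℂ) * u + (((-1)*(-1) : ℝ):ℂ) * v + ((1*(-1) : ℝ):ℂ) * w) →
      (0 ≤ 1 + ((1*1 : ℝ):ℂ) * u + ((1*(-1) : ℝ):ℂ) * v + ((1*(-1) : ℝ):ℂ) * w) →
      ‖u - v‖ ≤ 1 - w.re := by
    intro u v w hA hB
    rw [Complex.le_def] at hA hB
    simp only [Complex.add_re, Complex.add_im, Complex.mul_re, Complex.mul_im,
      Complex.one_re, Complex.one_im, Complex.ofReal_re, Complex.ofReal_im,
      Complex.zero_re, Complex.zero_im] at hA hB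
    obtain ⟨hA1, hA2⟩ := hA
    obtain ⟨hB1, hB2⟩ := hB
    have him : (u - v).im = 0 := by
      simp only [Complex.sub_im]; nlinarith
    have hre : |(u - v).re| ≤ 1 - w.re := by
      rw [Complex.sub_re, abs_le]
      constructor <;> nlinarith
    have huv : u - v = (((u - v).re : ℝ) : ℂ) := by
      apply Complex.ext <;> simp [him]
    calc ‖u - v‖ = ‖(((u - v).re : ℝ) : ℂ)‖ := by rw [← huv]
      _ = |(u - v).re| := by rw [Complex.norm_real, Real.norm_eq_abs]
      _ ≤ 1 - w.re := hre
  constructor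
  · -- |tr ρ(W₁⊗W₂) - tr ρ(W₁⊗W₂')| ≤ 1 - re tr ρ(W₂⊗W₂')
    -- pattern: u = (X,Y), v = (X,Z), w = (Y,Z) with X=W₁, Y=W₂, Z=W₂'
    refine habs _ _ _ ?_ ?_
    · exact key W₁ W₂ W₂' hW₁ hW₂ hW₂' hn₁ hn₂ hn₂' (-1) 1 (-1)
        (by norm_num) (by norm_num) (by norm_num)
    · exact key W₁ W₂ W₂' hW₁ hW₂ hW₂' hn₁ hn₂ hn₂' 1 1 (-1)
        (by norm_num) (by norm_num) (by norm_num)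
  · -- |tr ρ(W₁⊗W₂) - tr ρ(W₁'⊗W₂)| ≤ 1 - re tr ρ(W₁⊗W₁')
    -- pattern: X=W₁, Y=W₁', Z=W₂ ; u = (X,Z), v = (Y,Z), w = (X,Y)
    have habs2 : ∀ u v w : ℂ,
        (0 ≤ 1 + ((1*(-1) : ℝ):ℂ) * w + ((1*(-1) : ℝ):ℂ) * u + (((-1)*(-1) : ℝ):ℂ) * v) →
        (0 ≤ 1 + ((1*(-1) : ℝ):ℂ) * w + ((1*1 : ℝ):ℂ) * u + (((-1)*1 : ℝ):ℂ) * v) →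
        ‖u - v‖ ≤ 1 - w.re := by
      intro u v w hA hB
      rw [Complex.le_def] at hA hB
      simp only [Complex.add_re, Complex.add_im, Complex.mul_re, Complex.mul_im,
        Complex.one_re, Complex.one_im, Complex.ofReal_re, Complex.ofReal_im,
        Complex.zero_re, Complex.zero_im] at hA hB
      obtain ⟨hA1, hA2⟩ := hA
      obtain ⟨hB1, hB2⟩ := hB
      have him : (u - v).im = 0 := by
        simp only [Complex.sub_im]; nlinarith
      have hre : |(u - v).re| ≤ 1 - w.re := by
        rw [Complex.sub_re, abs_le]
        constructor <;> nlinarith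
      have huv : u - v = (((u - v).re : ℝ) : ℂ) := by
        apply Complex.ext <;> simp [him]
      calc ‖u - v‖ = ‖(((u - v).re : ℝ) : ℂ)‖ := by rw [← huv]
        _ = |(u - v).re| := by rw [Complex.norm_real, Real.norm_eq_abs]
        _ ≤ 1 - w.re := hre
    refine habs2 _ _ _ ?_ ?_
    · exact key W₁ W₁' W₂ hW₁ hW₁' hW₂ hn₁ hn₁' hn₂ 1 (-1) (-1)
        (by norm_num) (by norm_num) (by norm_num)
    · exact key W₁ W₁' W₂ hW₁ hW₁' hW₂ hn₁ hn₁' hn₂ 1 (-1) 1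
        (by norm_num) (by norm_num) (by norm_num)

end BellPaper
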